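/- Let X ⊂ ℝⁿ be a finite set, let r > 0, and for x ∈ X let N(x) denote its one-hop neighborhood in the r-neighborhood graph G_r(X). Let 0 < ε < 1 satisfy, for every x ∈ X, ε < min{ (r − max_{y∈N(x)} ‖x−y‖) / max_{y∈N(x)} ‖x−y‖, (min_{y∉N(x)} ‖x−y‖ − r) / min_{y∉N(x)} ‖x−y‖ }. Let A ∈ ℝ^{m×n} be any (deterministic) matrix satisfying (1−ε)‖x−y‖ ≤ ‖Ax − Ay‖ ≤ (1+ε)‖x−y‖ for all x, y ∈ X. Then the map ψ: x ↦ Ax is a graph isomorphism between G_r(X) and G_r(AX), where AX = {Ax : x ∈ X}. -/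
import Mathlib


open MeasureTheory ProbabilityTheory

/-- The Euclidean (`L²`) norm of a vector in `ℝ^k`. -/
noncomputable def euclNorm {k : ℕ} (x : Fin k → ℝ) : ℝ := Real.sqrt (∑ i, x i ^ 2)

/-- The Euclidean distance between two vectors in `ℝ^k`. -/
noncomputable def distE {k : ℕ} (a b : Fin k → ℝ) : ℝ := euclNorm (a - b)

/-- Matrix-vector multiplication, viewing a matrix as a function of its rows. -/
def matVec {m n : ℕ} (A : Fin m → Fin n → ℝ) (x : Fin n → ℝ) : Fin m → ℝ :=
  fun i => ∑ j, A i j * x j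

/-- The law of a random `m × n` matrix with i.i.d. centered Gaussian entries of variance `v`. -/
noncomputable def gaussMat (m n : ℕ) (v : NNReal) : Measure (Fin m → Fin n → ℝ) :=
  Measure.pi fun _ : Fin m => Measure.pi fun _ : Fin n => gaussianReal 0 v

/-- Adjacency in the `r`-neighborhood graph `G_r(X)` (w.r.t. the distance `d`):
distinct points of `X` at distance `< r`. -/
def RAdj {V : Type*} (d : V → V → ℝ) (X : Finset V) (r : ℝ) (x y : V) : Prop :=
  x ≠ y ∧ x ∈ X ∧ y ∈ X ∧ d x y < r

/-- `max_{y ∈ N(x)} g x y`, where `N(x)` is the one-hop neighborhood of `x` in `G_r(X)`. -/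
noncomputable def maxNbrVal {V : Type*} (d : V → V → ℝ) (X : Finset V) (r : ℝ)
    (g : V → V → ℝ) (x : V) : ℝ :=
  sSup {s : ℝ | ∃ y, RAdj d X r x y ∧ s = g x y}

/-- `min_{y ∈ X, y ∉ N(x), y ≠ x} g x y`, where `N(x)` is the one-hop neighborhood of `x`
in `G_r(X)`. -/
noncomputable def minNonNbrVal {V : Type*} (d : V → V → ℝ) (X : Finset V) (r : ℝ)
    (g : V → V → ℝ) (x : V) : ℝ :=
  sInf {s : ℝ | ∃ y ∈ X, y ≠ x ∧ ¬ RAdj d X r x y ∧ s = g x y}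

/-- `ψ` is a graph isomorphism between `G_r(X)` and `G_r(ψ(X))`: it is a bijection of `X`
onto its image preserving and reflecting `r`-neighborhood adjacency. -/
def IsRIso {V W : Type*} [DecidableEq W] (dV : V → V → ℝ) (dW : W → W → ℝ)
    (X : Finset V) (r : ℝ) (ψ : V → W) : Prop :=
  Set.InjOn ψ X ∧
    ∀ x ∈ X, ∀ y ∈ X, (RAdj dV X r x y ↔ RAdj dW (X.image ψ) r (ψ x) (ψ y))

lemma distE_nonneg {k : ℕ} (a b : Fin k → ℝ) : 0 ≤ distE a b := Real.sqrt_nonneg _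

lemma distE_eq_zero_iff {k : ℕ} (a b : Fin k → ℝ) : distE a b = 0 ↔ a = b := by
  unfold distE euclNorm
  rw [Real.sqrt_eq_zero (by positivity)]
  constructor
  · intro h
    funext i
    have h2 := (Finset.sum_eq_zero_iff_of_nonneg (fun i _ => sq_nonneg _)).1 h i
      (Finset.mem_univ i)
    have h3 : (a - b) i = 0 := by nlinarith
    have h4 : a i - b i = 0 := h3
    linarith
  · intro h; simp [h]

lemma distE_pos {k : ℕ} {a b : Fin k → ℝ} (h : a ≠ b) : 0 < distE a b := by
  rcases (distE_nonneg a b).lt_or_eq with h' | h'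
  · exact h'
  · exact absurd ((distE_eq_zero_iff a b).1 h'.symm) h

/-- a deterministic linear map with (unsquared) distance distortion bounds
induces a graph isomorphism of `r`-neighborhood graphs. -/
theorem stmt_10 (n m : ℕ) (X : Finset (Fin n → ℝ)) (r : ℝ) (hr : 0 < r)
    (ε : ℝ) (hε0 : 0 < ε) (hε1 : ε < 1)
    (hgap : ∀ x ∈ X,
      ε < min
        ((r - maxNbrVal distE X r distE x) / maxNbrVal distE X r distE x)
        ((minNonNbrVal distE X r distE x - r) / minNonNbrVal distE X r distE x))
    (A : Fin m → Fin n → ℝ)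
    (hA : ∀ x ∈ X, ∀ y ∈ X,
      (1 - ε) * distE x y ≤ distE (matVec A x) (matVec A y) ∧
        distE (matVec A x) (matVec A y) ≤ (1 + ε) * distE x y) :
    IsRIso distE distE X r (matVec A) := by
  have hinj : Set.InjOn (matVec A) X := by
    intro x hx y hy hxy
    by_contra hne
    have h1 := (hA x hx y hy).1
    have h0 : distE (matVec A x) (matVec A y) = 0 := by
      rw [hxy]; exact (distE_eq_zero_iff _ _).2 rfl
    have hd : 0 < distE x y := distE_pos hne
    nlinarith
  have key1 : ∀ x ∈ X, ∀ y ∈ X, RAdj distE X r x y →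
      distE (matVec A x) (matVec A y) < r := by
    intro x hx y hy hadj
    set M := maxNbrVal distE X r distE x with hMdef
    have hdset : distE x y ∈ {s : ℝ | ∃ y, RAdj distE X r x y ∧ s = distE x y} :=
      ⟨y, hadj, rfl⟩
    have hbdd : BddAbove {s : ℝ | ∃ y, RAdj distE X r x y ∧ s = distE x y} := by
      refine ⟨r, ?_⟩
      rintro s ⟨z, hz, rfl⟩
      exact le_of_lt hz.2.2.2
    have hdM : distE x y ≤ M := le_csSup hbdd hdset
    have hM0 : 0 < M := lt_of_lt_of_le (distE_pos hadj.1) hdM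
    have hgx : ε < (r - M) / M := (hgap x hx).trans_le (min_le_left _ _)
    rw [lt_div_iff₀ hM0] at hgx
    have h2 := (hA x hx y hy).2
    nlinarith [distE_pos hadj.1]
  have key2 : ∀ x ∈ X, ∀ y ∈ X, x ≠ y → ¬ RAdj distE X r x y →
      r < distE (matVec A x) (matVec A y) := by
    intro x hx y hy hne hnadj
    set S := {s : ℝ | ∃ y ∈ X, y ≠ x ∧ ¬ RAdj distE X r x y ∧ s = distE x y} with hSdef
    have hdS : distE x y ∈ S := ⟨y, hy, hne.symm, hnadj, rfl⟩
    have hrS : ∀ s ∈ S, r ≤ s := by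
      rintro s ⟨z, hz, hzx, hnz, rfl⟩
      by_contra hlt
      push_neg at hlt
      exact hnz ⟨hzx.symm, hx, hz, hlt⟩
    set N := minNonNbrVal distE X r distE x with hNdef
    have hNd : N ≤ distE x y := csInf_le ⟨r, hrS⟩ hdS
    have hrN : r ≤ N := le_csInf ⟨_, hdS⟩ hrS
    have hN0 : 0 < N := lt_of_lt_of_le hr hrN
    have hgx : ε < (N - r) / N := (hgap x hx).trans_le (min_le_right _ _)
    rw [lt_div_iff₀ hN0] at hgx
    have h1 := (hA x hx y hy).1
    nlinarith
  refine ⟨hinj, fun x hx y hy => ?_⟩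
  constructor
  · intro hadj
    exact ⟨fun h => hadj.1 (hinj hx hy h), Finset.mem_image_of_mem _ hx,
      Finset.mem_image_of_mem _ hy, key1 x hx y hy hadj⟩
  · intro hadj
    have hne : x ≠ y := fun h => hadj.1 (by rw [h])
    refine ⟨hne, hx, hy, ?_⟩
    by_contra hlt
    push_neg at hlt
    have hnadj : ¬ RAdj distE X r x y := fun h => absurd h.2.2.2 (not_lt.2 hlt)
    have := key2 x hx y hy hne hnadj
    exact absurd hadj.2.2.2 (not_lt.2 (le_of_lt this))
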